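/- Let γ > 0, 0 ≤ μ_a < 1, 0 ≤ μ_b < 1, a(x) = x^{μ_a} on [0,1], b(x) = (1+x)^{μ_b} on [−1,0]. Suppose u ∈ V²_a(0,1) and w ∈ V²_b(−1,0) satisfy (a u')' = 0 a.e. on (0,1), (b w')' = 0 a.e. on (−1,0), w(−1) = 0, u(0) = w(0), lim_{x→0⁺}(a u')(x) = (b w')(0), and γ u(1) + u'(1) = 0. Then u ≡ 0 and w ≡ 0. -/

import Mathlib

open MeasureTheory Set Filter Topology

/-- `u ∈ V¹_α(x₀, ℓ)` (complex-valued): `u ∈ L²(x₀, ℓ)`, `u` is locally absolutely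
continuous on `(x₀, ℓ]` with a.e. derivative `u'` (expressed via the fundamental theorem of
calculus on compact subintervals of `(x₀, ℓ]`), and `√α · u' ∈ L²(x₀, ℓ)`. -/
def MemV1C (x₀ ℓ : ℝ) (α : ℝ → ℝ) (u u' : ℝ → ℂ) : Prop :=
  MemLp u 2 (volume.restrict (Ioo x₀ ℓ)) ∧
  (∀ x y : ℝ, x₀ < x → x ≤ y → y ≤ ℓ →
    IntervalIntegrable u' volume x y ∧ u y - u x = ∫ t in x..y, u' t) ∧
  MemLp (fun x => Real.sqrt (α x) • u' x) 2 (volume.restrict (Ioo x₀ ℓ))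

/-- `u ∈ V²_α(x₀, ℓ)` (complex-valued): `u ∈ V¹_α(x₀, ℓ)` and `α·u' ∈ H¹(x₀, ℓ)`, i.e.
`α·u' ∈ L²`, it is absolutely continuous with a.e. derivative `g' = (α u')' ∈ L²`. -/
def MemV2C (x₀ ℓ : ℝ) (α : ℝ → ℝ) (u u' g' : ℝ → ℂ) : Prop :=
  MemV1C x₀ ℓ α u u' ∧
  MemLp (fun x => α x • u' x) 2 (volume.restrict (Ioo x₀ ℓ)) ∧
  MemLp g' 2 (volume.restrict (Ioo x₀ ℓ)) ∧
  ∀ x y : ℝ, x₀ < x → x ≤ y → y ≤ ℓ →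
    IntervalIntegrable g' volume x y ∧ α y • u' y - α x • u' x = ∫ t in x..y, g' t

/-- Kernel of the operator (weakly degenerate left string, `μ_b < 1`):
if `u ∈ V²_a(0,1)`, `w ∈ V²_b(-1,0)` satisfy `(a u')' = 0` and `(b w')' = 0` a.e.,
`w(-1) = 0`, `u(0) = w(0)`, `lim_{x→0⁺}(a u')(x) = (b w')(0)` and `γ u(1) + u'(1) = 0`,
then `u ≡ 0` and `w ≡ 0`. -/
theorem kernel_trivial_weak (γ μa μb : ℝ) (hγ : 0 < γ)
    (hμa0 : 0 ≤ μa) (hμa1 : μa < 1) (hμb0 : 0 ≤ μb) (hμb1 : μb < 1)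
    (u u' gu w w' gw : ℝ → ℂ)
    (hu : MemV2C 0 1 (fun x => x ^ μa) u u' gu)
    (hw : MemV2C (-1) 0 (fun x => (1 + x) ^ μb) w w' gw)
    (hgu : gu =ᵐ[volume.restrict (Ioo (0 : ℝ) 1)] 0)
    (hgw : gw =ᵐ[volume.restrict (Ioo (-1 : ℝ) 0)] 0)
    (hwm1 : Tendsto w (𝓝[>] (-1 : ℝ)) (𝓝 0))
    (huw : Tendsto u (𝓝[>] (0 : ℝ)) (𝓝 (w 0)))
    (htrans : Tendsto (fun x : ℝ => (x ^ μa : ℝ) • u' x) (𝓝[>] (0 : ℝ))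
      (𝓝 ((((1 : ℝ) + 0) ^ μb : ℝ) • w' 0)))
    (hbc : (γ : ℂ) * u 1 + u' 1 = 0) :
    (∀ x ∈ Ioc (0 : ℝ) 1, u x = 0) ∧ (∀ x ∈ Ioc (-1 : ℝ) 0, w x = 0) := by
  have h1a : (0:ℝ) < 1 - μa := by linarith
  have h1b : (0:ℝ) < 1 - μb := by linarith
  -- the integral of gu over subintervals vanishes
  have hgu0 : ∀ x y : ℝ, 0 < x → x ≤ y → y ≤ 1 → (∫ t in x..y, gu t) = 0 := by
    intro x y hx hxy hy1
    have H : ∀ᵐ t ∂(volume : Measure ℝ), t ∈ Ioo (0:ℝ) 1 → gu t = 0 :=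
      (ae_restrict_iff' measurableSet_Ioo).mp hgu
    have H1 : ∀ᵐ t ∂(volume : Measure ℝ), t ≠ (1:ℝ) := by
      simp [ae_iff]
    have Hae : ∀ᵐ t ∂(volume : Measure ℝ), t ∈ uIoc x y → gu t = (0 : ℝ → ℂ) t := by
      filter_upwards [H, H1] with t ht ht1 htI
      rw [uIoc_of_le hxy] at htI
      exact ht ⟨lt_trans hx htI.1, lt_of_le_of_ne (le_trans htI.2 hy1) ht1⟩
    rw [intervalIntegral.integral_congr_ae Hae]
    simp
  have hgw0 : ∀ x y : ℝ, -1 < x → x ≤ y → y ≤ 0 → (∫ t in x..y, gw t) = 0 := by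
    intro x y hx hxy hy1
    have H : ∀ᵐ t ∂(volume : Measure ℝ), t ∈ Ioo (-1:ℝ) 0 → gw t = 0 :=
      (ae_restrict_iff' measurableSet_Ioo).mp hgw
    have H1 : ∀ᵐ t ∂(volume : Measure ℝ), t ≠ (0:ℝ) := by
      simp [ae_iff]
    have Hae : ∀ᵐ t ∂(volume : Measure ℝ), t ∈ uIoc x y → gw t = (0 : ℝ → ℂ) t := by
      filter_upwards [H, H1] with t ht ht1 htI
      rw [uIoc_of_le hxy] at htI
      exact ht ⟨lt_trans hx htI.1, lt_of_le_of_ne (le_trans htI.2 hy1) ht1⟩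
    rw [intervalIntegral.integral_congr_ae Hae]
    simp
  set c : ℂ := u' 1 with hc
  -- a u' is constant equal to c on (0,1]
  have hconst_u : ∀ x : ℝ, 0 < x → x ≤ 1 → (x ^ μa : ℝ) • u' x = c := by
    intro x hx hx1
    have h := (hu.2.2.2 x 1 hx hx1 le_rfl).2
    rw [hgu0 x 1 hx hx1 le_rfl] at h
    simp only [Real.one_rpow, one_smul] at h
    exact (sub_eq_zero.mp h).symm
  -- b w' is constant equal to w' 0 on (-1,0]
  have hconst_w : ∀ x : ℝ, -1 < x → x ≤ 0 → ((1 + x) ^ μb : ℝ) • w' x = w' 0 := by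
    intro x hx hx0
    have h := (hw.2.2.2 x 0 hx hx0 le_rfl).2
    rw [hgw0 x 0 hx hx0 le_rfl] at h
    norm_num [Real.one_rpow] at h
    exact (sub_eq_zero.mp h).symm
  -- the transmission condition identifies the constants
  have hcb : w' 0 = c := by
    have h1 : Tendsto (fun x : ℝ => (x ^ μa : ℝ) • u' x) (𝓝[>] (0:ℝ)) (𝓝 c) := by
      have hev : ∀ᶠ x in 𝓝[>] (0:ℝ), (x ^ μa : ℝ) • u' x = c := by
        filter_upwards [Ioo_mem_nhdsGT_of_mem (⟨le_rfl, one_pos⟩ :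
            (0:ℝ) ∈ Ico (0:ℝ) 1)] with x hx
        exact hconst_u x hx.1 hx.2.le
      exact Tendsto.congr' (hev.mono fun x hx => hx.symm) tendsto_const_nhds
    have h2 : Tendsto (fun x : ℝ => (x ^ μa : ℝ) • u' x) (𝓝[>] (0:ℝ)) (𝓝 (w' 0)) := by
      have : (((1 : ℝ) + 0) ^ μb : ℝ) • w' 0 = w' 0 := by
        norm_num [Real.one_rpow]
      rwa [this] at htrans
    exact tendsto_nhds_unique h2 h1
  -- explicit increment formula for u
  have hint_u : ∀ x y : ℝ, 0 < x → x ≤ y → y ≤ 1 →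
      u y - u x = (((y ^ (1-μa) - x ^ (1-μa)) / (1-μa) : ℝ)) • c := by
    intro x y hx hxy hy1
    have hftc := (hu.1.2.1 x y hx hxy hy1).2
    have heq : EqOn u' (fun t => (t ^ (-μa) : ℝ) • c) (uIcc x y) := by
      intro t ht
      rw [uIcc_of_le hxy] at ht
      have ht0 : 0 < t := lt_of_lt_of_le hx ht.1
      have hcu := hconst_u t ht0 (le_trans ht.2 hy1)
      have hpos : (t : ℝ) ^ μa ≠ 0 := ne_of_gt (Real.rpow_pos_of_pos ht0 μa)
      simp only [Real.rpow_neg ht0.le]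
      rw [← hcu, smul_smul, inv_mul_cancel₀ hpos, one_smul]
    rw [intervalIntegral.integral_congr heq, intervalIntegral.integral_smul_const,
      integral_rpow (Or.inl (by linarith : (-1:ℝ) < -μa))] at hftc
    have e : -μa + 1 = 1 - μa := by ring
    rw [e] at hftc
    exact hftc
  -- explicit increment formula for w
  have hint_w : ∀ x y : ℝ, -1 < x → x ≤ y → y ≤ 0 →
      w y - w x = ((((1+y) ^ (1-μb) - (1+x) ^ (1-μb)) / (1-μb) : ℝ)) • c := by
    intro x y hx hxy hy1
    have hftc := (hw.1.2.1 x y hx hxy hy1).2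
    have heq : EqOn w' (fun t => ((1+t) ^ (-μb) : ℝ) • c) (uIcc x y) := by
      intro t ht
      rw [uIcc_of_le hxy] at ht
      have ht0 : 0 < 1 + t := by linarith [ht.1, hx]
      have hcw := hconst_w t (by linarith [ht.1]) (le_trans ht.2 hy1)
      rw [hcb] at hcw
      have hpos : ((1+t) : ℝ) ^ μb ≠ 0 := ne_of_gt (Real.rpow_pos_of_pos ht0 μb)
      simp only [Real.rpow_neg ht0.le]
      rw [← hcw, smul_smul, inv_mul_cancel₀ hpos, one_smul]
    have hcomp : (∫ t in x..y, (((1+t) ^ (-μb) : ℝ)) • c)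
        = (∫ t in x..y, (((1+t) ^ (-μb) : ℝ))) • c :=
      intervalIntegral.integral_smul_const _ _
    have hval : (∫ t in x..y, (((1+t) ^ (-μb) : ℝ)))
        = ((1+y) ^ (1-μb) - (1+x) ^ (1-μb)) / (1-μb) := by
      have := intervalIntegral.integral_comp_add_left (fun s : ℝ => s ^ (-μb)) 1
        (a := x) (b := y)
      rw [this, integral_rpow (Or.inl (by linarith : (-1:ℝ) < -μb))]
      have e : -μb + 1 = 1 - μb := by ring
      rw [e]
    rw [intervalIntegral.integral_congr heq, hcomp, hval] at hftc
    exact hftc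
  -- formula for u on (0,1]
  have hu_formula : ∀ y : ℝ, 0 < y → y ≤ 1 →
      u y = w 0 + ((y ^ (1-μa) / (1-μa) : ℝ)) • c := by
    intro y hy hy1
    have l1 : Tendsto (fun x : ℝ => u y - (((y ^ (1-μa) - x ^ (1-μa)) / (1-μa) : ℝ)) • c)
        (𝓝[>] (0:ℝ)) (𝓝 (u y - (((y ^ (1-μa) - 0) / (1-μa) : ℝ)) • c)) := by
      apply Tendsto.sub tendsto_const_nhds
      apply Tendsto.smul_const
      apply Tendsto.div_const
      apply Tendsto.const_sub
      have hcont : ContinuousAt (fun x : ℝ => x ^ (1-μa)) 0 :=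
        Real.continuousAt_rpow_const 0 (1-μa) (Or.inr h1a.le)
      have htend : Tendsto (fun x : ℝ => x ^ (1-μa)) (𝓝[>] (0:ℝ)) (𝓝 ((0:ℝ) ^ (1-μa))) :=
        hcont.tendsto.mono_left nhdsWithin_le_nhds
      rwa [Real.zero_rpow (ne_of_gt h1a)] at htend
    have l2 : Tendsto u (𝓝[>] (0:ℝ))
        (𝓝 (u y - (((y ^ (1-μa) - 0) / (1-μa) : ℝ)) • c)) := by
      apply l1.congr'
      filter_upwards [Ioo_mem_nhdsGT_of_mem (⟨le_rfl, hy⟩ :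
          (0:ℝ) ∈ Ico (0:ℝ) y)] with x hx
      have h := hint_u x y hx.1 hx.2.le hy1
      rw [← h]; ring
    have := tendsto_nhds_unique l2 huw
    rw [sub_zero] at this
    exact eq_add_of_sub_eq this
  -- formula for w on (-1,0]
  have hw_formula : ∀ y : ℝ, -1 < y → y ≤ 0 →
      w y = (((1+y) ^ (1-μb) / (1-μb) : ℝ)) • c := by
    intro y hy hy1
    have l1 : Tendsto (fun x : ℝ => w y - ((((1+y) ^ (1-μb) - (1+x) ^ (1-μb)) / (1-μb) : ℝ)) • c)
        (𝓝[>] (-1:ℝ)) (𝓝 (w y - ((((1+y) ^ (1-μb) - 0) / (1-μb) : ℝ)) • c)) := by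
      apply Tendsto.sub tendsto_const_nhds
      apply Tendsto.smul_const
      apply Tendsto.div_const
      apply Tendsto.const_sub
      have hcont : ContinuousAt (fun x : ℝ => (1+x) ^ (1-μb)) (-1) := by
        have h1 : ContinuousAt (fun s : ℝ => s ^ (1-μb)) (1 + (-1)) := by
          norm_num
          exact Real.continuousAt_rpow_const 0 (1-μb) (Or.inr h1b.le)
        exact h1.comp (by fun_prop)
      have htend : Tendsto (fun x : ℝ => (1+x) ^ (1-μb)) (𝓝[>] (-1:ℝ))
          (𝓝 ((1+(-1):ℝ) ^ (1-μb))) := hcont.tendsto.mono_left nhdsWithin_le_nhds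
      norm_num at htend
      rwa [Real.zero_rpow (ne_of_gt h1b)] at htend
    have l2 : Tendsto w (𝓝[>] (-1:ℝ))
        (𝓝 (w y - ((((1+y) ^ (1-μb) - 0) / (1-μb) : ℝ)) • c)) := by
      apply l1.congr'
      filter_upwards [Ioo_mem_nhdsGT_of_mem (⟨le_rfl, hy⟩ :
          (-1:ℝ) ∈ Ico (-1:ℝ) y)] with x hx
      have h := hint_w x y hx.1 hx.2.le hy1
      rw [← h]; ring
    have h0 := tendsto_nhds_unique l2 hwm1
    have : w y = ((((1+y) ^ (1-μb) - 0) / (1-μb) : ℝ)) • c := by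
      rw [sub_eq_zero] at h0; exact h0
    rw [this]; rw [sub_zero]
  -- boundary condition forces c = 0
  have hc0 : c = 0 := by
    have h1 : u 1 = w 0 + (((1:ℝ) ^ (1-μa) / (1-μa) : ℝ)) • c := hu_formula 1 one_pos le_rfl
    have h0 : w 0 = ((((1:ℝ)+0) ^ (1-μb) / (1-μb) : ℝ)) • c :=
      hw_formula 0 (by norm_num) le_rfl
    rw [Real.one_rpow] at h1
    norm_num [Real.one_rpow] at h0
    rw [h1, h0] at hbc
    simp only [Complex.real_smul] at hbc
    have ha' : ((1 - μa : ℝ) : ℂ) ≠ 0 := by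
      rw [Complex.ofReal_ne_zero]; exact ne_of_gt h1a
    have hb' : ((1 - μb : ℝ) : ℂ) ≠ 0 := by
      rw [Complex.ofReal_ne_zero]; exact ne_of_gt h1b
    have heq : ((γ / (1-μb) + γ / (1-μa) + 1 : ℝ) : ℂ) * c = 0 := by
      push_cast
      push_cast at hbc
      field_simp at hbc ⊢
      linear_combination hbc
    have hK : ((γ / (1-μb) + γ / (1-μa) + 1 : ℝ) : ℂ) ≠ 0 := by
      rw [Complex.ofReal_ne_zero]
      positivity
    exact (mul_eq_zero.mp heq).resolve_left hK
  constructor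
  · intro x hx
    have h0 : w 0 = ((((1:ℝ)+0) ^ (1-μb) / (1-μb) : ℝ)) • c :=
      hw_formula 0 (by norm_num) le_rfl
    rw [hu_formula x hx.1 hx.2, h0, hc0]
    simp
  · intro x hx
    rw [hw_formula x hx.1 hx.2, hc0]
    simp
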